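/- A countably infinite subgroup of a compact Hausdorff topological group is never Cayley bounded. -/

import Mathlib

open Pointwise

/-- A group is Cayley bounded if every symmetric generating set containing `1` has
some power equal to the whole group. -/
def CayleyBounded (G : Type*) [Group G] : Prop :=
  ∀ U : Set G, U⁻¹ = U → (1 : G) ∈ U → Subgroup.closure U = ⊤ →
    ∃ n : ℕ, 1 ≤ n ∧ U ^ n = Set.univ

open Set Topology Filter

set_option linter.unusedSectionVars false
set_option maxHeartbeats 1000000

section Aux2
variable {G : Type*} [Group G] [TopologicalSpace G] [IsTopologicalGroup G]

def IsGoodNhd (W : Set G) : Prop :=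
  IsOpen W ∧ (1 : G) ∈ W ∧ W⁻¹ = W ∧ ∀ g x : G, x ∈ W → g * x * g⁻¹ ∈ W

variable [CompactSpace G]

lemma exists_isGoodNhd_subset {V : Set G} (hV : IsOpen V) (h1 : (1 : G) ∈ V) :
    ∃ W : Set G, IsGoodNhd W ∧ W ⊆ V := by
  classical
  set S : Set G := {x | ∀ g : G, g * x * g⁻¹ ∈ V} with hSdef
  have hSsubV : S ⊆ V := by
    intro x hx; have := hx 1; simpa using this
  have hSconj : ∀ g x : G, x ∈ S → g * x * g⁻¹ ∈ S := by
    intro g x hx h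
    have := hx (h * g)
    have he : h * g * x * (h * g)⁻¹ = h * (g * x * g⁻¹) * h⁻¹ := by group
    rw [he] at this
    exact this
  -- tube argument
  have hT : IsOpen {p : G × G | p.1 * p.2 * p.1⁻¹ ∈ V} := by
    have hc : Continuous fun p : G × G => p.1 * p.2 * p.1⁻¹ := by
      exact ((continuous_fst.mul continuous_snd).mul continuous_fst.inv)
    exact hV.preimage hc
  have hch : ∀ g : G, ∃ AB : Set G × Set G, IsOpen AB.1 ∧ IsOpen AB.2 ∧ g ∈ AB.1 ∧
      (1 : G) ∈ AB.2 ∧ ∀ a ∈ AB.1, ∀ b ∈ AB.2, a * b * a⁻¹ ∈ V := by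
    intro g
    have hmem : (g, (1 : G)) ∈ {p : G × G | p.1 * p.2 * p.1⁻¹ ∈ V} := by
      simpa using h1
    rcases isOpen_prod_iff.1 hT g 1 hmem with ⟨A, B, hA, hB, hgA, h1B, hABT⟩
    exact ⟨(A, B), hA, hB, hgA, h1B, fun a ha b hb => hABT (Set.mk_mem_prod ha hb)⟩
  choose AB hA hB hgA h1B hABV using hch
  have hcov : (Set.univ : Set G) ⊆ ⋃ g : G, (AB g).1 := fun g _ => Set.mem_iUnion.2 ⟨g, hgA g⟩
  rcases isCompact_univ.elim_finite_subcover (fun g => (AB g).1) (fun g => hA g) hcov with ⟨F, hF⟩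
  set X : Set G := ⋂ g ∈ F, (AB g).2 with hXdef
  have hXo : IsOpen X := isOpen_biInter_finset (fun g _ => hB g)
  have h1X : (1 : G) ∈ X := mem_iInter₂.2 fun g _ => h1B g
  have hXS : X ⊆ S := by
    intro x hx h
    rcases Set.mem_iUnion₂.1 (hF (Set.mem_univ h)) with ⟨g₀, hg₀F, hhA⟩
    exact hABV g₀ h hhA x (mem_iInter₂.1 hx g₀ hg₀F)
  -- conjugation homeomorphism preserves interior S
  have hconj_int : ∀ g x : G, x ∈ interior S → g * x * g⁻¹ ∈ interior S := by
    intro g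
    have hpre : (fun x : G => g⁻¹ * x * g) ⁻¹' S = S := by
      ext x
      constructor
      · intro hx
        have := hSconj g _ hx
        have he : g * (g⁻¹ * x * g) * g⁻¹ = x := by group
        rwa [he] at this
      · intro hx
        have := hSconj g⁻¹ x hx
        simpa using this
    have hcont : Continuous fun x : G => g⁻¹ * x * g :=
      (continuous_const.mul continuous_id).mul continuous_const
    intro x hx
    have hopen : IsOpen ((fun x : G => g⁻¹ * x * g) ⁻¹' interior S) :=
      isOpen_interior.preimage hcont
    have hsub : ((fun x : G => g⁻¹ * x * g) ⁻¹' interior S) ⊆ S := by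
      intro y hy
      have : (g⁻¹ * y * g) ∈ S := interior_subset hy
      rw [← hpre]; exact this
    have hmem : g * x * g⁻¹ ∈ (fun x : G => g⁻¹ * x * g) ⁻¹' interior S := by
      have he : g⁻¹ * (g * x * g⁻¹) * g = x := by group
      simp only [Set.mem_preimage, he]
      exact hx
    exact interior_maximal hsub hopen hmem
  refine ⟨interior S ∩ (interior S)⁻¹, ⟨?_, ?_, ?_, ?_⟩, ?_⟩
  · exact isOpen_interior.inter isOpen_interior.inv
  · have h1i : (1 : G) ∈ interior S := interior_maximal hXS hXo h1X
    exact ⟨h1i, by simpa using h1i⟩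
  · ext x; simp only [Set.mem_inv, Set.mem_inter_iff]
    constructor
    · rintro ⟨h1', h2'⟩
      exact ⟨by simpa using h2', by simpa using h1'⟩
    · rintro ⟨h1', h2'⟩
      exact ⟨by simpa using h2', by simpa using h1'⟩
  · rintro g x ⟨hx1, hx2⟩
    refine ⟨hconj_int g x hx1, ?_⟩
    have hxinv : x⁻¹ ∈ interior S := by simpa using hx2
    have := hconj_int g x⁻¹ hxinv
    simp only [Set.mem_inv]
    have he : (g * x * g⁻¹)⁻¹ = g * x⁻¹ * g⁻¹ := by group
    rwa [he]
  · exact fun x hx => hSsubV (interior_subset hx.1)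

end Aux2

section Aux3
variable {G : Type*} [Group G] [TopologicalSpace G] [IsTopologicalGroup G] [CompactSpace G] [T2Space G]

lemma isGoodNhd_univ : IsGoodNhd (Set.univ : Set G) :=
  ⟨isOpen_univ, mem_univ _, by simp, fun _ _ _ => mem_univ _⟩


lemma closure_subset_mul_right {S W : Set G} (hWo : IsOpen W) (h1 : (1 : G) ∈ W)
    (hsym : W⁻¹ = W) : closure S ⊆ S * W := by
  intro x hx
  have hxmem : x ∈ {x} * W := by
    have := Set.mul_mem_mul (Set.mem_singleton x) h1
    simpa using this
  obtain ⟨s, hso, hsS⟩ := mem_closure_iff.1 hx _ (IsOpen.mul_left hWo) hxmem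
  obtain ⟨b, hb, w, hw, hws⟩ := Set.mem_mul.1 hso
  have hbx : b = x := hb
  rw [hbx] at hws
  have hwinv : w⁻¹ ∈ W := by
    rw [← hsym]; simpa using hw
  have hxe : x = s * w⁻¹ := by rw [← hws]; group
  rw [hxe]
  exact Set.mul_mem_mul hsS hwinv

lemma exists_good_step {W : Set G} (hW : IsGoodNhd W) (g₀ : G) :
    ∃ W' : Set G, IsGoodNhd W' ∧ W' * W' ⊆ W ∧ (g₀ ≠ 1 → g₀ ∉ W' * W') := by
  by_cases hg : g₀ = 1
  · obtain ⟨B, hBo, h1B, hBB⟩ := exists_open_nhds_one_mul_subset (hW.1.mem_nhds hW.2.1)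
    obtain ⟨W', hW', hsub⟩ := exists_isGoodNhd_subset hBo h1B
    exact ⟨W', hW', (Set.mul_subset_mul hsub hsub).trans hBB, fun h => absurd hg h⟩
  · have hAo : IsOpen (W ∩ {g₀}ᶜ) := hW.1.inter (isOpen_compl_singleton)
    have h1A : (1 : G) ∈ W ∩ {g₀}ᶜ := ⟨hW.2.1, by simpa using fun h => hg h.symm⟩
    obtain ⟨B, hBo, h1B, hBB⟩ := exists_open_nhds_one_mul_subset (hAo.mem_nhds h1A)
    obtain ⟨W', hW', hsub⟩ := exists_isGoodNhd_subset hBo h1B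
    have hWW : W' * W' ⊆ W ∩ {g₀}ᶜ := (Set.mul_subset_mul hsub hsub).trans hBB
    refine ⟨W', hW', hWW.trans (Set.inter_subset_left), fun _ hmem => ?_⟩
    exact (hWW hmem).2 rfl

/-- The recursive chain of good neighborhoods avoiding a given sequence. -/
noncomputable def goodChain (a : ℕ → G) : ℕ → {W : Set G // IsGoodNhd W}
  | 0 => ⟨Set.univ, isGoodNhd_univ⟩
  | j + 1 =>
    ⟨(exists_good_step (goodChain a j).2 (a j)).choose,
      (exists_good_step (goodChain a j).2 (a j)).choose_spec.1⟩

lemma goodChain_spec (a : ℕ → G) (j : ℕ) :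
    (goodChain a (j + 1)).1 * (goodChain a (j + 1)).1 ⊆ (goodChain a j).1 ∧
      (a j ≠ 1 → a j ∉ (goodChain a (j + 1)).1 * (goodChain a (j + 1)).1) := by
  have h := (exists_good_step (goodChain a j).2 (a j)).choose_spec
  exact ⟨h.2.1, h.2.2⟩

end Aux3


/-- A countably infinite subgroup of a compact Hausdorff topological group is never
Cayley bounded. -/
theorem countable_infinite_subgroup_of_compact_not_cayleyBounded
    {G : Type*} [Group G] [TopologicalSpace G] [IsTopologicalGroup G]
    [CompactSpace G] [T2Space G] (Γ : Subgroup G) [Countable Γ] [Infinite Γ] :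
    ¬ CayleyBounded Γ := by
  classical
  intro hCB
  obtain ⟨e⟩ : Nonempty (ℕ ≃ ↥Γ) := nonempty_equiv_of_countable
  set a : ℕ → G := fun j => ((e j : ↥Γ) : G) with ha
  have haΓ : ∀ j, a j ∈ Γ := fun j => (e j).2
  set V : ℕ → Set G := fun j => (goodChain a j).1 with hV
  have hVgood : ∀ j, IsGoodNhd (V j) := fun j => (goodChain a j).2
  have hV0 : V 0 = Set.univ := rfl
  have hVmul : ∀ j, V (j + 1) * V (j + 1) ⊆ V j := fun j => (goodChain_spec a j).1
  have hVavoid : ∀ j, a j ≠ 1 → a j ∉ V (j + 1) * V (j + 1) := fun j => (goodChain_spec a j).2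
  have hVsub : ∀ j, V (j + 1) ⊆ V j := by
    intro j w hw
    exact hVmul j (by simpa using Set.mul_mem_mul hw (hVgood (j + 1)).2.1)
  have hVmono : ∀ {m m' : ℕ}, m ≤ m' → V m' ⊆ V m := by
    intro m m' h
    induction h with
    | refl => exact le_refl _
    | step h ih => exact (hVsub _).trans ih
  set Λ : ℕ → Subgroup G := fun j => Subgroup.closure (a '' Set.Iio j) with hΛ
  have hΛΓ : ∀ j, Λ j ≤ Γ := by
    intro j
    apply Subgroup.closure_le Γ |>.2
    rintro x ⟨i, _, rfl⟩
    exact haΓ i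
  have hΛmono : ∀ {i j : ℕ}, i ≤ j → Λ i ≤ Λ j := by
    intro i j h
    exact Subgroup.closure_mono (Set.image_mono (fun x hx => lt_of_lt_of_le hx h))
  have hΛmem : ∀ i j, i < j → a i ∈ Λ j := fun i j h =>
    Subgroup.subset_closure ⟨i, h, rfl⟩
  have hC : ∀ m : ℕ, ∃ J : ℕ, ∀ s ∈ (Γ : Set G), ∃ l, l ∈ Λ J ∧ s * l⁻¹ ∈ V m := by
    intro m
    have hKcomp : IsCompact (closure (Γ : Set G)) := isClosed_closure.isCompact
    have hopen : ∀ γ : ↥Γ, IsOpen (V m * ({(γ : G)} : Set G)) := fun γ =>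
      (hVgood m).1.mul_right
    have hcov : closure (Γ : Set G) ⊆ ⋃ γ : ↥Γ, V m * ({(γ : G)} : Set G) := by
      intro x hx
      have hxo : x ∈ V m * ({x} : Set G) := by
        have := Set.mul_mem_mul (hVgood m).2.1 (Set.mem_singleton x)
        simpa using this
      obtain ⟨γG, hγo, hγΓ⟩ := mem_closure_iff.1 hx _ ((hVgood m).1.mul_right) hxo
      obtain ⟨v, hv, y, hy, hvy⟩ := Set.mem_mul.1 hγo
      have hyx : y = x := hy
      rw [hyx] at hvy
      have hvinv : v⁻¹ ∈ V m := by
        rw [← (hVgood m).2.2.1]; simpa using hv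
      refine Set.mem_iUnion.2 ⟨⟨γG, hγΓ⟩, ?_⟩
      have hmm : v⁻¹ * γG ∈ V m * ({γG} : Set G) :=
        Set.mul_mem_mul hvinv (Set.mem_singleton γG)
      have hxe : x = v⁻¹ * γG := by rw [← hvy]; group
      rw [← hxe] at hmm
      exact hmm
    obtain ⟨F, hF⟩ := hKcomp.elim_finite_subcover _ hopen hcov
    refine ⟨(F.sup fun γ => e.symm γ) + 1, ?_⟩
    intro s hs
    have hsK : s ∈ closure (Γ : Set G) := subset_closure hs
    obtain ⟨γ, hγF, hsm⟩ := Set.mem_iUnion₂.1 (hF hsK)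
    obtain ⟨v, hv, y, hy, hvy⟩ := Set.mem_mul.1 hsm
    have hyγ : y = (γ : G) := hy
    rw [hyγ] at hvy
    refine ⟨(γ : G), ?_, ?_⟩
    · have hidx : e.symm γ < F.sup (fun γ => e.symm γ) + 1 :=
        Nat.lt_succ_of_le (Finset.le_sup hγF)
      have hmem : a (e.symm γ) ∈ Λ (F.sup (fun γ => e.symm γ) + 1) := hΛmem _ _ hidx
      simpa [ha] using hmem
    · have hve : s * (γ : G)⁻¹ = v := by rw [← hvy]; group
      rwa [hve]
  set J' : ℕ → ℕ := fun m => (hC m).choose with hJ'def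
  have hJ' : ∀ m, ∀ s ∈ (Γ : Set G), ∃ l, l ∈ Λ (J' m) ∧ s * l⁻¹ ∈ V m :=
    fun m => (hC m).choose_spec
  set ψ : ℕ → ℕ := fun j => Nat.findGreatest (fun m => J' m ≤ j) j with hψdef
  have hψge : ∀ m j, m ≤ j → J' m ≤ j → m ≤ ψ j := fun m j h1 h2 =>
    Nat.le_findGreatest h1 h2
  have ht : ∀ j, ∃ τ : G, τ ∈ Γ ∧ (∃ l, l ∈ Λ j ∧ a j = τ * l) ∧ τ ∈ V (ψ j) := by
    intro j
    by_cases h : J' (ψ j) ≤ j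
    · obtain ⟨l, hl, hv⟩ := hJ' (ψ j) (a j) (haΓ j)
      refine ⟨a j * l⁻¹, ?_, ⟨l, hΛmono h hl, by group⟩, hv⟩
      exact Γ.mul_mem (haΓ j) (Γ.inv_mem (hΛΓ _ hl))
    · have hψ0 : ψ j = 0 := by
        by_contra hne
        have := (Nat.findGreatest_eq_iff.1 (rfl : ψ j = ψ j)).2.1 hne
        exact h this
      refine ⟨a j, haΓ j, ⟨1, (Λ j).one_mem, by group⟩, ?_⟩
      rw [hψ0, hV0]
      exact Set.mem_univ _
  set t : ℕ → G := fun j => (ht j).choose with htdef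
  have htΓ : ∀ j, t j ∈ Γ := fun j => (ht j).choose_spec.1
  have htl : ∀ j, ∃ l, l ∈ Λ j ∧ a j = t j * l := fun j => (ht j).choose_spec.2.1
  have htV : ∀ j, t j ∈ V (ψ j) := fun j => (ht j).choose_spec.2.2
  set U' : Set G := {1} ∪ ⋃ j, ({t j, (t j)⁻¹} : Set G) with hU'def
  have hU'Γ : U' ⊆ (Γ : Set G) := by
    rintro x (rfl | hx)
    · exact Γ.one_mem
    · obtain ⟨j, hj⟩ := Set.mem_iUnion.1 hx
      rcases hj with rfl | hj
      · exact htΓ j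
      · rcases hj with rfl
        exact Γ.inv_mem (htΓ j)
  have hU'inv : ∀ x, x ∈ U' → x⁻¹ ∈ U' := by
    rintro x (rfl | hx)
    · simp [hU'def]
    · obtain ⟨j, hj⟩ := Set.mem_iUnion.1 hx
      rcases hj with rfl | hj
      · exact Or.inr (Set.mem_iUnion.2 ⟨j, Or.inr rfl⟩)
      · rcases hj with rfl
        refine Or.inr (Set.mem_iUnion.2 ⟨j, Or.inl ?_⟩)
        exact inv_inv (t j)
  have hU'symm : U'⁻¹ = U' := by
    ext x
    rw [Set.mem_inv]
    constructor
    · intro h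
      have := hU'inv _ h
      simpa using this
    · intro h
      exact hU'inv _ h
  set N : Set G := ⋂ m, V m with hNdef
  have hNmem : ∀ {x}, x ∈ N ↔ ∀ m, x ∈ V m := fun {x} => Set.mem_iInter
  have hNV : ∀ m, N ⊆ V m := fun m x hx => Set.mem_iInter.1 hx m
  set NN : Subgroup G :=
    { carrier := N
      mul_mem' := by
        intro x y hx hy
        apply Set.mem_iInter.2
        intro m
        exact hVmul m (Set.mul_mem_mul (hNV (m + 1) hx) (hNV (m + 1) hy))
      one_mem' := Set.mem_iInter.2 fun m => (hVgood m).2.1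
      inv_mem' := by
        intro x hx
        apply Set.mem_iInter.2
        intro m
        have := hNV m hx
        rw [← (hVgood m).2.2.1]
        simpa using this } with hNNdef
  have hNNnormal : NN.Normal := by
    constructor
    intro n hn g
    apply Set.mem_iInter.2
    intro m
    exact (hVgood m).2.2.2 g n (hNV m hn)
  have hNclosed : IsClosed N := by
    have hNeq : N = ⋂ m, closure (V (m + 1)) := by
      apply Set.Subset.antisymm
      · intro x hx
        exact Set.mem_iInter.2 fun m => subset_closure (hNV (m + 1) hx)
      · intro x hx
        apply Set.mem_iInter.2
        intro m
        have hcl : closure (V (m + 1)) ⊆ V (m + 1) * V (m + 1) :=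
          closure_subset_mul_right (hVgood (m + 1)).1 (hVgood (m + 1)).2.1 (hVgood (m + 1)).2.2.1
        exact hVmul m (hcl (Set.mem_iInter.1 hx m))
    rw [hNeq]
    exact isClosed_iInter fun m => isClosed_closure
  have hkey1 : ∀ δ : ↥Γ, (δ : G) ∈ N → δ = 1 := by
    intro δ hδ
    by_contra hne
    set j : ℕ := e.symm δ with hj
    have haj : a j = (δ : G) := by simp [ha, hj]
    have hne' : a j ≠ 1 := by
      rw [haj]
      simpa using hne
    apply hVavoid j hne'
    have hmem : a j ∈ V (j + 1) := by rw [haj]; exact hNV (j + 1) hδ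
    have := Set.mul_mem_mul hmem (hVgood (j + 1)).2.1
    simpa using this
  have hclU' : closure U' ⊆ U' ∪ N := by
    intro x hx
    by_cases hxU : x ∈ U'
    · exact Or.inl hxU
    right
    apply Set.mem_iInter.2
    intro m
    suffices hsuf : x ∈ closure (V (m + 1)) by
      have hcl : closure (V (m + 1)) ⊆ V (m + 1) * V (m + 1) :=
        closure_subset_mul_right (hVgood (m + 1)).1 (hVgood (m + 1)).2.1 (hVgood (m + 1)).2.2.1
      exact hVmul m (hcl hsuf)
    set j₀ : ℕ := max (m + 1) (J' (m + 1)) with hj₀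
    set Fs : Set G := {1} ∪ ⋃ j ∈ Finset.range j₀, ({t j, (t j)⁻¹} : Set G) with hFs
    have hFfin : Fs.Finite := by
      apply Set.Finite.union (Set.finite_singleton _)
      apply Set.Finite.biUnion (Finset.range j₀).finite_toSet
      intro j _
      exact (Set.finite_singleton _).insert _
    have hFU : Fs ⊆ U' := by
      rintro y (rfl | hy)
      · exact Or.inl rfl
      · obtain ⟨j, _, hj⟩ := Set.mem_iUnion₂.1 hy
        exact Or.inr (Set.mem_iUnion.2 ⟨j, hj⟩)
    have hsplit : U' ⊆ Fs ∪ V (m + 1) := by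
      rintro y (rfl | hy)
      · exact Or.inl (Or.inl rfl)
      obtain ⟨j, hj⟩ := Set.mem_iUnion.1 hy
      by_cases hjlt : j < j₀
      · exact Or.inl (Or.inr (Set.mem_iUnion₂.2 ⟨j, Finset.mem_range.2 hjlt, hj⟩))
      push_neg at hjlt
      have hψj : m + 1 ≤ ψ j :=
        hψge (m + 1) j (le_trans (le_max_left _ _) hjlt)
          (le_trans (le_max_right _ _) hjlt)
      have htVm : t j ∈ V (m + 1) := hVmono hψj (htV j)
      rcases hj with rfl | hj
      · exact Or.inr htVm
      · rcases hj with rfl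
        refine Or.inr ?_
        rw [← (hVgood (m + 1)).2.2.1]
        simpa using htVm
    have hcl2 : x ∈ closure Fs ∪ closure (V (m + 1)) := by
      rw [← closure_union]
      exact closure_mono hsplit hx
    rw [hFfin.isClosed.closure_eq] at hcl2
    rcases hcl2 with hF | hcl
    · exact absurd (hFU hF) hxU
    · exact hcl
  set U : Set ↥Γ := Subtype.val ⁻¹' U' with hUdef
  have hUsymm : U⁻¹ = U := by
    ext x
    rw [Set.mem_inv]
    simp only [hUdef, Set.mem_preimage]
    constructor
    · intro h
      have := hU'inv _ h
      simpa using this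
    · intro h
      have := hU'inv _ h
      simpa using this
  have hU1 : (1 : ↥Γ) ∈ U := by
    simp only [hUdef, Set.mem_preimage]
    exact Or.inl rfl
  have hUgen : Subgroup.closure U = ⊤ := by
    set H : Subgroup G := Subgroup.map Γ.subtype (Subgroup.closure U) with hHdef
    have hmemH : ∀ j, a j ∈ H := by
      intro j
      induction j using Nat.strong_induction_on with
      | _ j ih =>
        obtain ⟨l, hl, heq⟩ := htl j
        have htH : t j ∈ H := by
          refine ⟨⟨t j, htΓ j⟩, ?_, rfl⟩
          apply Subgroup.subset_closure
          simp only [hUdef, Set.mem_preimage]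
          exact Or.inr (Set.mem_iUnion.2 ⟨j, Or.inl rfl⟩)
        have hlH : l ∈ H := by
          have hle : Λ j ≤ H := by
            apply Subgroup.closure_le H |>.2
            rintro x ⟨i, hi, rfl⟩
            exact ih i hi
          exact hle hl
        rw [heq]
        exact H.mul_mem htH hlH
    rw [Subgroup.eq_top_iff']
    intro γ
    have hγH : (γ : G) ∈ H := by
      have := hmemH (e.symm γ)
      simpa [ha] using this
    obtain ⟨δ, hδ, hδγ⟩ := hγH
    have : δ = γ := Subtype.ext hδγ
    rwa [this] at hδ
  obtain ⟨n, hn1, hn⟩ := hCB U hUsymm hU1 hUgen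
  have hU'n : U' ^ n = (Γ : Set G) := by
    have himg := congrArg (fun s : Set ↥Γ => Subtype.val '' s) hn
    simp only [Set.image_univ, Subtype.range_coe_subtype] at himg
    have h1 : (Subtype.val '' (U ^ n) : Set G) = (Subtype.val '' U) ^ n := by
      have := Set.image_pow Γ.subtype U n
      simpa [Subgroup.coe_subtype] using this
    have h2 : (Subtype.val '' U : Set G) = U' := by
      rw [hUdef, Set.image_preimage_eq_inter_range, Subtype.range_coe_subtype]
      exact Set.inter_eq_self_of_subset_left hU'Γ
    rw [h1, h2] at himg
    exact himg
  haveI hNNn : NN.Normal := hNNnormal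
  -- closure of Γ is a subgroup (as a set)
  have hKmul : ∀ x y : G, x ∈ closure (Γ : Set G) → y ∈ closure (Γ : Set G) →
      x * y ∈ closure (Γ : Set G) := by
    intro x y hx hy
    have hx' : x ∈ Γ.topologicalClosure := by
      rw [← SetLike.mem_coe, Subgroup.topologicalClosure_coe]; exact hx
    have hy' : y ∈ Γ.topologicalClosure := by
      rw [← SetLike.mem_coe, Subgroup.topologicalClosure_coe]; exact hy
    have := Γ.topologicalClosure.mul_mem hx' hy'
    rw [← SetLike.mem_coe, Subgroup.topologicalClosure_coe] at this
    exact this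
  -- K ⊆ Γ * N
  have hcompcl : ∀ k : ℕ, IsCompact ((closure U') ^ (k + 1)) := by
    intro k
    induction k with
    | zero => simpa [pow_one] using isClosed_closure.isCompact
    | succ k ih =>
      rw [pow_succ]
      exact ih.mul isClosed_closure.isCompact
  have hclB : closure U' ⊆ ((Γ ⊔ NN : Subgroup G) : Set G) := by
    intro x hx
    rcases hclU' hx with h | h
    · exact SetLike.le_def.1 (le_sup_left : Γ ≤ Γ ⊔ NN) (hU'Γ h)
    · exact SetLike.le_def.1 (le_sup_right : NN ≤ Γ ⊔ NN) h
  have hBsub : ∀ k : ℕ, (closure U') ^ (k + 1) ⊆ ((Γ ⊔ NN : Subgroup G) : Set G) := by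
    intro k
    induction k with
    | zero => simpa [pow_one] using hclB
    | succ k ih =>
      rw [pow_succ]
      intro x hx
      obtain ⟨y, hy, w, hw, hyw⟩ := Set.mem_mul.1 hx
      rw [← hyw]
      exact (Γ ⊔ NN).mul_mem (ih hy) (hclB hw)
  obtain ⟨k, hk⟩ : ∃ k, n = k + 1 := ⟨n - 1, by omega⟩
  have hKsub : closure (Γ : Set G) ⊆ (Γ : Set G) * N := by
    have h0 : closure (Γ : Set G) = closure (U' ^ n) := by rw [hU'n]
    have h1 : closure (U' ^ n) ⊆ (closure U') ^ n := by
      apply closure_minimal (Set.pow_subset_pow_left subset_closure)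
      rw [hk]
      exact (hcompcl k).isClosed
    have h2 : ((closure U') ^ n) ⊆ ((Γ ⊔ NN : Subgroup G) : Set G) := by
      rw [hk]; exact hBsub k
    have h3 : ((Γ ⊔ NN : Subgroup G) : Set G) = (Γ : Set G) * N :=
      Subgroup.mul_normal Γ NN
    rw [h0, ← h3]
    exact h1.trans h2
  -- Baire category argument on the compact space closure Γ
  haveI hKcs : CompactSpace ↥(closure (Γ : Set G)) :=
    isCompact_iff_compactSpace.1 isClosed_closure.isCompact
  haveI hKne : Nonempty ↥(closure (Γ : Set G)) := ⟨⟨1, subset_closure Γ.one_mem⟩⟩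
  set f : ↥Γ → Set ↥(closure (Γ : Set G)) := fun γ => {z | (γ : G)⁻¹ * (z : G) ∈ N} with hfdef
  have hfclosed : ∀ γ, IsClosed (f γ) := fun γ =>
    IsClosed.preimage (continuous_const.mul continuous_subtype_val) hNclosed
  have hfcover : ⋃ γ, f γ = Set.univ := by
    ext z
    simp only [Set.mem_iUnion, Set.mem_univ, iff_true]
    obtain ⟨g, hg, ν, hν, hgν⟩ := Set.mem_mul.1 (hKsub z.2)
    refine ⟨⟨g, hg⟩, ?_⟩
    have : g⁻¹ * (z : G) = ν := by rw [← hgν]; group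
    simp only [hfdef, Set.mem_setOf_eq]
    rw [this]
    exact hν
  obtain ⟨γ₀, hγ₀⟩ := nonempty_interior_of_iUnion_of_closed hfclosed hfcover
  obtain ⟨x₀, hx₀⟩ := hγ₀
  have hfN : f γ₀ ∈ 𝓝 x₀ := mem_interior_iff_mem_nhds.1 hx₀
  rw [nhds_subtype_eq_comap] at hfN
  obtain ⟨S, hS, hSsub⟩ := Filter.mem_comap.1 hfN
  have hx₀O : (x₀ : G) ∈ interior S := mem_interior_iff_mem_nhds.2 hS
  have hON : ∀ y : G, y ∈ closure (Γ : Set G) → y ∈ interior S → (γ₀ : G)⁻¹ * y ∈ N := by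
    intro y hyK hyO
    have hmem : (⟨y, hyK⟩ : ↥(closure (Γ : Set G))) ∈ Subtype.val ⁻¹' S := by
      simp only [Set.mem_preimage]
      exact interior_subset hyO
    exact hSsub hmem
  have hν₀ : (γ₀ : G)⁻¹ * (x₀ : G) ∈ N := hON _ x₀.2 hx₀O
  set W₁ : Set G := (fun w => (x₀ : G) * w) ⁻¹' interior S with hW₁def
  have hW₁o : IsOpen W₁ := isOpen_interior.preimage (continuous_const.mul continuous_id)
  have h1W₁ : (1 : G) ∈ W₁ := by
    simp only [hW₁def, Set.mem_preimage, mul_one]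
    exact hx₀O
  have hW₁N : ∀ w, w ∈ W₁ → w ∈ closure (Γ : Set G) → w ∈ N := by
    intro w hw hwK
    have hxw : (x₀ : G) * w ∈ closure (Γ : Set G) := hKmul _ _ x₀.2 hwK
    have hν : (γ₀ : G)⁻¹ * ((x₀ : G) * w) ∈ N := hON _ hxw hw
    have hwe : w = ((γ₀ : G)⁻¹ * (x₀ : G))⁻¹ * ((γ₀ : G)⁻¹ * ((x₀ : G) * w)) := by group
    rw [hwe]
    exact NN.mul_mem (NN.inv_mem hν₀) hν
  obtain ⟨B₂, hB₂o, h1B₂, hB₂W⟩ := exists_open_nhds_one_mul_subset (hW₁o.mem_nhds h1W₁)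
  set W₂ : Set G := B₂ ∩ B₂⁻¹ with hW₂def
  have hW₂o : IsOpen W₂ := hB₂o.inter hB₂o.inv
  have h1W₂ : (1 : G) ∈ W₂ := ⟨h1B₂, by simpa using h1B₂⟩
  have hW₂pair : ∀ u v : G, u ∈ W₂ → v ∈ W₂ → u⁻¹ * v ∈ W₁ := by
    intro u v hu hv
    have hu' : u⁻¹ ∈ B₂ := by simpa using hu.2
    exact hB₂W (Set.mul_mem_mul hu' hv.1)
  have hcov2 : closure (Γ : Set G) ⊆
      ⋃ z : ↥(closure (Γ : Set G)), ({(z : G)} : Set G) * W₂ := by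
    intro y hy
    refine Set.mem_iUnion.2 ⟨⟨y, hy⟩, ?_⟩
    have := Set.mul_mem_mul (Set.mem_singleton y) h1W₂
    simpa using this
  obtain ⟨σ, hσ⟩ := isClosed_closure.isCompact.elim_finite_subcover _
    (fun z : ↥(closure (Γ : Set G)) => hW₂o.mul_left) hcov2
  have hφ : ∀ γ : ↥Γ, ∃ z, z ∈ σ ∧ (γ : G) ∈ ({(z : G)} : Set G) * W₂ := by
    intro γ
    obtain ⟨z, hz, hmem⟩ := Set.mem_iUnion₂.1 (hσ (subset_closure γ.2))
    exact ⟨z, hz, hmem⟩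
  choose zf hzσ hzmem using hφ
  have hinj : Function.Injective (fun γ : ↥Γ => (⟨zf γ, hzσ γ⟩ : {x // x ∈ σ})) := by
    intro γ γ' hzz
    have hz : zf γ = zf γ' := congrArg Subtype.val hzz
    obtain ⟨b, hb, w, hw, hbw⟩ := Set.mem_mul.1 (hzmem γ)
    obtain ⟨b', hb', w', hw', hbw'⟩ := Set.mem_mul.1 (hzmem γ')
    have hbz : b = ((zf γ : ↥(closure (Γ : Set G))) : G) := hb
    have hb'z : b' = ((zf γ' : ↥(closure (Γ : Set G))) : G) := hb'
    have hmm : (γ : G)⁻¹ * (γ' : G) = w⁻¹ * w' := by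
      rw [← hbw, ← hbw', hbz, hb'z, hz]
      group
    have hWmem : (γ : G)⁻¹ * (γ' : G) ∈ W₁ := by
      rw [hmm]
      exact hW₂pair _ _ hw hw'
    have hKm : (γ : G)⁻¹ * (γ' : G) ∈ closure (Γ : Set G) :=
      subset_closure (Γ.mul_mem (Γ.inv_mem γ.2) γ'.2)
    have hδN : ((γ⁻¹ * γ' : ↥Γ) : G) ∈ N := by
      have := hW₁N _ hWmem hKm
      simpa using this
    have hδ1 := hkey1 _ hδN
    have : γ⁻¹ * γ' = 1 := hδ1
    exact (inv_mul_eq_one.1 this)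
  haveI hfin : Finite ↥Γ := Finite.of_injective _ hinj
  exact not_finite ↥Γ
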